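/- Let G be a bipartite graph with a strictly positive weight function w on its vertices, and let u be the starting vertex. The position (G,u,w) of the game NimG-RM (remove tokens then move, no loops) is a first-player win under misère convention if and only if every maximum matching of G covers the vertex u. -/

import Mathlib

universe u
mutual
  inductive GNormalWin {α : Type u} (moves : α → α → Prop) : α → Prop
    | step {p q : α} : moves p q → GNormalLose moves q → GNormalWin moves p
  inductive GNormalLose {α : Type u} (moves : α → α → Prop) : α → Prop
    | intro {p : α} : (∀ q, moves p q → GNormalWin moves q) → GNormalLose moves p
end

mutual
  inductive GMisereWin {α : Type u} (moves : α → α → Prop) : α → Prop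
    | terminal {p : α} : (∀ q, ¬ moves p q) → GMisereWin moves p
    | step {p q : α} : moves p q → GMisereLose moves q → GMisereWin moves p
  inductive GMisereLose {α : Type u} (moves : α → α → Prop) : α → Prop
    | intro {p q₀ : α} : moves p q₀ → (∀ q, moves p q → GMisereWin moves q) → GMisereLose moves p
end

def nimMove {V : Type u} (adj : V → V → Prop) (p q : V × (V → ℕ)) : Prop :=
  adj p.1 q.1 ∧ q.2 p.1 < p.2 p.1 ∧ ∀ v, v ≠ p.1 → q.2 v = p.2 v

mutual
  inductive NimRMWin {V : Type u} (adj : V → V → Prop) : V × (V → ℕ) → Prop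
    | zero {p} : p.2 p.1 = 0 → NimRMWin adj p
    | step {p q} : nimMove adj p q → NimRMLose adj q → NimRMWin adj p
  inductive NimRMLose {V : Type u} (adj : V → V → Prop) : V × (V → ℕ) → Prop
    | intro {p} : p.2 p.1 ≠ 0 → (∀ q, nimMove adj p q → NimRMWin adj q) → NimRMLose adj p
end

def vgMove {V : Type u} (A : V → V → Prop) (p q : Set V × V) : Prop :=
  A p.2 q.2 ∧ q.2 ∈ p.1 ∧ q.2 ≠ p.2 ∧ q.1 = p.1 \ {p.2}

def addOut {V : Type u} (A : V → V → Prop) : V ⊕ V → V ⊕ V → Prop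
  | .inl a, .inl b => A a b
  | .inl a, .inr b => a = b
  | _, _ => False

def MaxMatching {V : Type u} (G : SimpleGraph V) (M : G.Subgraph) : Prop :=
  M.IsMatching ∧ ∀ N : G.Subgraph, N.IsMatching → N.edgeSet.ncard ≤ M.edgeSet.ncard
set_option linter.unusedSectionVars false
set_option maxHeartbeats 1000000

section Dev
variable {V : Type} [Fintype V] [DecidableEq V]

def IsMch (G : SimpleGraph V) (c : V → Bool) (S : Finset V) (M : Finset (V × V)) : Prop :=
  (∀ p ∈ M, G.Adj p.1 p.2 ∧ p.1 ∈ S ∧ p.2 ∈ S ∧ c p.1 = false ∧ c p.2 = true) ∧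
  (∀ p ∈ M, ∀ q ∈ M, p.1 = q.1 → p = q) ∧
  (∀ p ∈ M, ∀ q ∈ M, p.2 = q.2 → p = q)

open Classical in
noncomputable def nu (G : SimpleGraph V) (c : V → Bool) (S : Finset V) : ℕ :=
  (Finset.univ.filter (fun M => IsMch G c S M)).sup Finset.card

variable {G : SimpleGraph V} {c : V → Bool} {S T : Finset V} {M : Finset (V × V)}

theorem IsMch.empty : IsMch G c S (∅ : Finset (V × V)) := by
  refine ⟨?_, ?_, ?_⟩ <;> intro p hp <;> simp at hp

theorem nu_le (h : IsMch G c S M) : M.card ≤ nu G c S := by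
  classical
  refine Finset.le_sup ?_
  simp only [Finset.mem_filter, Finset.mem_univ, true_and]
  convert h

theorem nu_spec (G : SimpleGraph V) (c : V → Bool) (S : Finset V) :
    ∃ M, IsMch G c S M ∧ M.card = nu G c S := by
  classical
  have hne : (Finset.univ.filter (fun M => IsMch G c S M)).Nonempty :=
    ⟨∅, by simp [IsMch.empty]⟩
  obtain ⟨M, hM, hcard⟩ := Finset.exists_mem_eq_sup _ hne Finset.card
  refine ⟨M, ?_, ?_⟩
  · simpa using (Finset.mem_filter.mp hM).2
  · rw [nu]; convert hcard.symm using 2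
theorem IsMch.mono (h : IsMch G c S M) (hST : S ⊆ T) : IsMch G c T M := by
  obtain ⟨h1, h2, h3⟩ := h
  exact ⟨fun p hp => ⟨(h1 p hp).1, hST (h1 p hp).2.1, hST (h1 p hp).2.2.1,
    (h1 p hp).2.2.2⟩, h2, h3⟩

theorem nu_mono (hST : S ⊆ T) : nu G c S ≤ nu G c T := by
  obtain ⟨M, hM, hcard⟩ := nu_spec G c S
  calc nu G c S = M.card := hcard.symm
    _ ≤ nu G c T := nu_le (hM.mono hST)

/-- A vertex is touched by at most one pair of a matching. -/
theorem IsMch.touch_eq (h : IsMch G c S M) {p q : V × V} (hp : p ∈ M) (hq : q ∈ M)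
    {v : V} (hpv : p.1 = v ∨ p.2 = v) (hqv : q.1 = v ∨ q.2 = v) : p = q := by
  obtain ⟨h1, h2, h3⟩ := h
  rcases hpv with hpv | hpv <;> rcases hqv with hqv | hqv
  · exact h2 p hp q hq (hpv.trans hqv.symm)
  · exfalso
    have := (h1 p hp).2.2.2.1
    have := (h1 q hq).2.2.2.2
    rw [hpv, hqv] at *
    simp_all
  · exfalso
    have := (h1 p hp).2.2.2.2
    have := (h1 q hq).2.2.2.1
    rw [hpv, hqv] at *
    simp_all
  · exact h3 p hp q hq (hpv.trans hqv.symm)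

theorem IsMch.restrict (h : IsMch G c S M) {v : V}
    (hv : ∀ p ∈ M, p.1 ≠ v ∧ p.2 ≠ v) : IsMch G c (S.erase v) M := by
  obtain ⟨h1, h2, h3⟩ := h
  refine ⟨fun p hp => ⟨(h1 p hp).1, ?_, ?_, (h1 p hp).2.2.2⟩, h2, h3⟩
  · exact Finset.mem_erase.mpr ⟨(hv p hp).1, (h1 p hp).2.1⟩
  · exact Finset.mem_erase.mpr ⟨(hv p hp).2, (h1 p hp).2.2.1⟩

theorem nu_erase_le {v : V} : nu G c (S.erase v) ≤ nu G c S :=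
  nu_mono (Finset.erase_subset v S)

theorem nu_le_nu_erase_add_one {v : V} : nu G c S ≤ nu G c (S.erase v) + 1 := by
  classical
  obtain ⟨M, hM, hcard⟩ := nu_spec G c S
  set M' := M.filter (fun p => p.1 ≠ v ∧ p.2 ≠ v) with hM'
  have hres : IsMch G c (S.erase v) M' := by
    obtain ⟨h1, h2, h3⟩ := hM
    refine ⟨fun p hp => ?_, fun p hp q hq => h2 p (Finset.mem_of_mem_filter p hp) q
      (Finset.mem_of_mem_filter q hq), fun p hp q hq => h3 p (Finset.mem_of_mem_filter p hp) q
      (Finset.mem_of_mem_filter q hq)⟩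
    have hpM := Finset.mem_of_mem_filter p hp
    have hpv := (Finset.mem_filter.mp hp).2
    exact ⟨(h1 p hpM).1, Finset.mem_erase.mpr ⟨hpv.1, (h1 p hpM).2.1⟩,
      Finset.mem_erase.mpr ⟨hpv.2, (h1 p hpM).2.2.1⟩, (h1 p hpM).2.2.2⟩
  have hsplit : (M.filter (fun p => ¬(p.1 ≠ v ∧ p.2 ≠ v))).card ≤ 1 := by
    refine Finset.card_le_one.mpr ?_
    intro p hp q hq
    have hpM := Finset.mem_of_mem_filter p hp
    have hqM := Finset.mem_of_mem_filter q hq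
    have hpv := (Finset.mem_filter.mp hp).2
    have hqv := (Finset.mem_filter.mp hq).2
    push_neg at hpv hqv
    have hp' : p.1 = v ∨ p.2 = v := by
      by_cases h : p.1 = v
      · exact Or.inl h
      · exact Or.inr (hpv h)
    have hq' : q.1 = v ∨ q.2 = v := by
      by_cases h : q.1 = v
      · exact Or.inl h
      · exact Or.inr (hqv h)
    exact hM.touch_eq hpM hqM hp' hq'
  have hcards := Finset.card_filter_add_card_filter_not
    (s := M) (p := fun p => p.1 ≠ v ∧ p.2 ≠ v)
  have h1 : M'.card ≤ nu G c (S.erase v) := nu_le hres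
  rw [hM'] at h1
  omega

end Dev
section Dev2
variable {V : Type} [Fintype V] [DecidableEq V]

def Xside (c : V → Bool) (S : Finset V) : Finset V := S.filter (fun a => c a = false)

open Classical in
noncomputable def Nb (G : SimpleGraph V) (S : Finset V) (A : Finset V) : Finset V :=
  S.filter (fun y => ∃ a ∈ A, G.Adj a y)

variable {G : SimpleGraph V} {c : V → Bool} {S : Finset V} {M : Finset (V × V)} {A : Finset V}

theorem count_bound (h : IsMch G c S M) (hA : A ⊆ Xside c S) :
    M.card + A.card ≤ (Xside c S).card + (Nb G S A).card := by
  classical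
  have hsplit := Finset.card_filter_add_card_filter_not (s := M)
    (p := fun p => p.1 ∈ A)
  have h1 : (M.filter (fun p => p.1 ∈ A)).card ≤ (Nb G S A).card := by
    refine Finset.card_le_card_of_injOn Prod.snd ?_ ?_
    · intro p hp
      have hpM := Finset.mem_of_mem_filter p hp
      have hpA := (Finset.mem_filter.mp hp).2
      refine Finset.mem_filter.mpr ⟨(h.1 p hpM).2.2.1, ⟨p.1, hpA, (h.1 p hpM).1⟩⟩
    · intro p hp q hq hpq
      exact h.2.2 p (Finset.mem_of_mem_filter p hp) q (Finset.mem_of_mem_filter q hq) hpq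
  have h2 : (M.filter (fun p => ¬ p.1 ∈ A)).card ≤ (Xside c S \ A).card := by
    refine Finset.card_le_card_of_injOn Prod.fst ?_ ?_
    · intro p hp
      have hpM := Finset.mem_of_mem_filter p hp
      have hpA := (Finset.mem_filter.mp hp).2
      refine Finset.mem_sdiff.mpr ⟨?_, hpA⟩
      exact Finset.mem_filter.mpr ⟨(h.1 p hpM).2.1, (h.1 p hpM).2.2.2.1⟩
    · intro p hp q hq hpq
      exact h.2.1 p (Finset.mem_of_mem_filter p hp) q (Finset.mem_of_mem_filter q hq) hpq
  have h3 : (Xside c S \ A).card = (Xside c S).card - A.card := Finset.card_sdiff_of_subset hA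
  have h4 : A.card ≤ (Xside c S).card := Finset.card_le_card hA
  omega

theorem nu_count (hA : A ⊆ Xside c S) :
    nu G c S + A.card ≤ (Xside c S).card + (Nb G S A).card := by
  obtain ⟨M, hM, hcard⟩ := nu_spec G c S
  have := count_bound hM hA
  omega

theorem hall_bound (hc : ∀ a b, G.Adj a b → c a ≠ c b) (S : Finset V) :
    ∃ A, A ⊆ Xside c S ∧ (Xside c S).card + (Nb G S A).card ≤ nu G c S + A.card := by
  classical
  set X := Xside c S with hX
  set d := X.powerset.sup (fun A => A.card - (Nb G S A).card) with hd
  have hdle : ∀ A, A ⊆ X → A.card ≤ (Nb G S A).card + d := by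
    intro A hA
    have h2 : A.card - (Nb G S A).card ≤ d := Finset.le_sup
      (f := fun A => A.card - (Nb G S A).card) (Finset.mem_powerset.mpr hA)
    omega
  -- Hall application to get nu ≥ X.card - d
  have hXnu : X.card ≤ nu G c S + d := by
    set t : {x // x ∈ X} → Finset (V ⊕ Fin d) := fun x =>
      ((S.filter (fun y => G.Adj x.1 y)).image Sum.inl) ∪ (Finset.univ.image Sum.inr) with ht
    have hall : ∀ s : Finset {x // x ∈ X}, s.card ≤ (s.biUnion t).card := by
      intro s
      rcases s.eq_empty_or_nonempty with rfl | hs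
      · simp
      · set A := s.image Subtype.val with hA
        have hAX : A ⊆ X := by
          intro a ha
          obtain ⟨x, hx, rfl⟩ := Finset.mem_image.mp ha
          exact x.2
        have hcardA : A.card = s.card := Finset.card_image_of_injective s Subtype.val_injective
        have hsub : ((Nb G S A).image Sum.inl ∪
            Finset.univ.image (Sum.inr : Fin d → V ⊕ Fin d)) ⊆ s.biUnion t := by
          intro e he
          rcases Finset.mem_union.mp he with he | he
          · obtain ⟨y, hy, rfl⟩ := Finset.mem_image.mp he
            have hyS := (Finset.mem_filter.mp hy).1
            obtain ⟨a, haA, hadj⟩ := (Finset.mem_filter.mp hy).2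
            obtain ⟨x, hx, rfl⟩ := Finset.mem_image.mp haA
            refine Finset.mem_biUnion.mpr ⟨x, hx, ?_⟩
            refine Finset.mem_union_left _ ?_
            exact Finset.mem_image.mpr ⟨y, Finset.mem_filter.mpr ⟨hyS, hadj⟩, rfl⟩
          · obtain ⟨j, _, rfl⟩ := Finset.mem_image.mp he
            obtain ⟨x, hx⟩ := hs
            refine Finset.mem_biUnion.mpr ⟨x, hx, ?_⟩
            exact Finset.mem_union_right _ (Finset.mem_image.mpr ⟨j, Finset.mem_univ _, rfl⟩)
        have hdisj : Disjoint ((Nb G S A).image (Sum.inl : V → V ⊕ Fin d))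
            (Finset.univ.image (Sum.inr : Fin d → V ⊕ Fin d)) := by
          rw [Finset.disjoint_left]
          rintro e he1 he2
          obtain ⟨y, _, rfl⟩ := Finset.mem_image.mp he1
          obtain ⟨j, _, hj⟩ := Finset.mem_image.mp he2
          simp at hj
        have hcardu : ((Nb G S A).image (Sum.inl : V → V ⊕ Fin d) ∪
            Finset.univ.image (Sum.inr : Fin d → V ⊕ Fin d)).card = (Nb G S A).card + d := by
          rw [Finset.card_union_of_disjoint hdisj,
            Finset.card_image_of_injective _ Sum.inl_injective,
            Finset.card_image_of_injective _ Sum.inr_injective]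
          simp
        calc s.card = A.card := hcardA.symm
          _ ≤ (Nb G S A).card + d := hdle A hAX
          _ = _ := hcardu.symm
          _ ≤ (s.biUnion t).card := Finset.card_le_card hsub
    obtain ⟨f, hfinj, hft⟩ := (Finset.all_card_le_biUnion_card_iff_exists_injective t).mp hall
    set T := Finset.univ.filter (fun x : {x // x ∈ X} => (f x).isLeft) with hT
    set g : {x // x ∈ X} → V := fun x => Sum.elim id (fun _ => x.1) (f x) with hg
    have hfT : ∀ x ∈ T, f x = Sum.inl (g x) := by
      intro x hx
      have := (Finset.mem_filter.mp hx).2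
      rcases hfx : f x with y | j
      · simp [hg, hfx]
      · rw [hfx] at this; simp at this
    have hmemg : ∀ x ∈ T, g x ∈ S ∧ G.Adj x.1 (g x) := by
      intro x hx
      have h1 := hft x
      rw [hfT x hx] at h1
      rcases Finset.mem_union.mp h1 with h1 | h1
      · obtain ⟨y, hy, hy2⟩ := Finset.mem_image.mp h1
        have : y = g x := Sum.inl_injective hy2
        subst this
        exact ⟨(Finset.mem_filter.mp hy).1, (Finset.mem_filter.mp hy).2⟩
      · obtain ⟨j, _, hj⟩ := Finset.mem_image.mp h1
        exact absurd hj (by simp)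
    set M := T.image (fun x => (x.1, g x)) with hM
    have hMch : IsMch G c S M := by
      refine ⟨?_, ?_, ?_⟩
      · rintro p hp
        obtain ⟨x, hx, rfl⟩ := Finset.mem_image.mp hp
        obtain ⟨hgS, hgadj⟩ := hmemg x hx
        have hxX : x.1 ∈ X := x.2
        have hxS : x.1 ∈ S := (Finset.mem_filter.mp hxX).1
        have hxc : c x.1 = false := (Finset.mem_filter.mp hxX).2
        have hgc : c (g x) = true := by
          have := hc _ _ hgadj
          rw [hxc] at this
          rcases hcg : c (g x) with _ | _
          · exact absurd hcg.symm this
          · rfl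
        exact ⟨hgadj, hxS, hgS, hxc, hgc⟩
      · rintro p hp q hq hpq
        obtain ⟨x, hx, rfl⟩ := Finset.mem_image.mp hp
        obtain ⟨x', hx', rfl⟩ := Finset.mem_image.mp hq
        have : x = x' := Subtype.ext hpq
        subst this; rfl
      · rintro p hp q hq hpq
        obtain ⟨x, hx, rfl⟩ := Finset.mem_image.mp hp
        obtain ⟨x', hx', rfl⟩ := Finset.mem_image.mp hq
        simp only at hpq
        have : f x = f x' := by rw [hfT x hx, hfT x' hx', hpq]
        have : x = x' := hfinj this
        subst this; rfl
    have hMcard : M.card = T.card := by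
      refine Finset.card_image_of_injOn ?_
      intro x _ x' _ h
      exact Subtype.ext (congrArg Prod.fst h)
    have hTc : (Finset.univ.filter (fun x : {x // x ∈ X} => ¬ (f x).isLeft)).card ≤ d := by
      set Tc := Finset.univ.filter (fun x : {x // x ∈ X} => ¬ (f x).isLeft) with hTcdef
      have h1 : Tc.card = (Tc.image f).card :=
        (Finset.card_image_of_injective _ hfinj).symm
      have h2 : Tc.image f ⊆ Finset.univ.image (Sum.inr : Fin d → V ⊕ Fin d) := by
        intro e he
        obtain ⟨x, hx, rfl⟩ := Finset.mem_image.mp he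
        have := (Finset.mem_filter.mp hx).2
        rcases hfx : f x with y | j
        · rw [hfx] at this; simp at this
        · exact Finset.mem_image.mpr ⟨j, Finset.mem_univ _, rfl⟩
      have h3 := Finset.card_le_card h2
      have h4 : (Finset.univ.image (Sum.inr : Fin d → V ⊕ Fin d)).card = d := by
        rw [Finset.card_image_of_injective _ Sum.inr_injective]; simp
      omega
    have hsplitT : T.card +
        (Finset.univ.filter (fun x : {x // x ∈ X} => ¬ (f x).isLeft)).card = X.card := by
      have h0 := Finset.card_filter_add_card_filter_not
        (s := (Finset.univ : Finset {x // x ∈ X})) (p := fun x => (f x).isLeft)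
      rw [hT]
      simpa using h0
    have hnu := nu_le hMch
    omega
  -- produce the witness set
  rcases Nat.eq_zero_or_pos d with hd0 | hdpos
  · refine ⟨∅, Finset.empty_subset _, ?_⟩
    have : Nb G S ∅ = ∅ := by
      ext y; simp [Nb]
    rw [this]
    simp
    omega
  · obtain ⟨A₀, hA₀mem, hA₀⟩ := Finset.exists_mem_eq_sup X.powerset
      ⟨∅, Finset.mem_powerset.mpr (Finset.empty_subset _)⟩
      (fun A => A.card - (Nb G S A).card)
    have hA₀X : A₀ ⊆ X := Finset.mem_powerset.mp hA₀mem
    refine ⟨A₀, hA₀X, ?_⟩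
    have : d = A₀.card - (Nb G S A₀).card := hA₀
    omega

end Dev2
section Dev3
variable {V : Type} [Fintype V] [DecidableEq V]
variable {G : SimpleGraph V} {c : V → Bool} {S : Finset V} {M : Finset (V × V)} {A : Finset V}

theorem IsMch.swap (h : IsMch G c S M) :
    IsMch G (fun v => !(c v)) S (M.image Prod.swap) := by
  obtain ⟨h1, h2, h3⟩ := h
  refine ⟨?_, ?_, ?_⟩
  · rintro q hq
    obtain ⟨p, hp, rfl⟩ := Finset.mem_image.mp hq
    obtain ⟨hadj, hS1, hS2, hc1, hc2⟩ := h1 p hp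
    exact ⟨hadj.symm, hS2, hS1, by simp [hc2], by simp [hc1]⟩
  · rintro q hq q' hq' he
    obtain ⟨p, hp, rfl⟩ := Finset.mem_image.mp hq
    obtain ⟨p', hp', rfl⟩ := Finset.mem_image.mp hq'
    have : p = p' := h3 p hp p' hp' he
    subst this; rfl
  · rintro q hq q' hq' he
    obtain ⟨p, hp, rfl⟩ := Finset.mem_image.mp hq
    obtain ⟨p', hp', rfl⟩ := Finset.mem_image.mp hq'
    have : p = p' := h2 p hp p' hp' he
    subst this; rfl

theorem nu_swap : nu G c S = nu G (fun v => !(c v)) S := by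
  have key : ∀ (c' : V → Bool), nu G c' S ≤ nu G (fun v => !(c' v)) S := by
    intro c'
    obtain ⟨M, hM, hcard⟩ := nu_spec G c' S
    calc nu G c' S = M.card := hcard.symm
      _ = (M.image Prod.swap).card :=
        (Finset.card_image_of_injective _ Prod.swap_injective).symm
      _ ≤ _ := nu_le hM.swap
  refine le_antisymm (key c) ?_
  have h2 := key (fun v => !(c v))
  have : (fun v => !(!(c v))) = c := funext fun v => Bool.not_not _
  rwa [this] at h2

theorem key_false (hc : ∀ a b, G.Adj a b → c a ≠ c b) {v z : V} (hv : v ∈ S) (hz : z ∈ S)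
    (hadj : G.Adj v z) (hcv : c v = false) (hin : nu G c (S.erase v) = nu G c S) :
    nu G c (S.erase z) < nu G c S := by
  classical
  have hcz : c z = true := by
    have := hc v z hadj
    rw [hcv] at this
    rcases h : c z with _ | _
    · exact absurd h.symm this
    · rfl
  obtain ⟨A, hAX, hineq⟩ := hall_bound hc S
  have hvA : v ∈ A := by
    by_contra hvA
    have hX' : Xside c (S.erase v) = (Xside c S).erase v := by
      ext a
      simp only [Xside, Finset.mem_filter, Finset.mem_erase]
      tauto
    have hAsub' : A ⊆ Xside c (S.erase v) := by
      rw [hX']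
      intro a ha
      exact Finset.mem_erase.mpr ⟨fun h => hvA (h ▸ ha), hAX ha⟩
    have hNb' : Nb G (S.erase v) A = Nb G S A := by
      ext y
      simp only [Nb, Finset.mem_filter, Finset.mem_erase]
      constructor
      · rintro ⟨⟨_, hyS⟩, hex⟩
        exact ⟨hyS, hex⟩
      · rintro ⟨hyS, hex⟩
        refine ⟨⟨?_, hyS⟩, hex⟩
        obtain ⟨a, haA, hadj'⟩ := hex
        have hca : c a = false := (Finset.mem_filter.mp (hAX haA)).2
        have hcy : c a ≠ c y := hc a y hadj'
        intro h
        subst h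
        rw [hca, hcv] at hcy
        exact hcy rfl
    have h1 := nu_count (G := G) (c := c) (S := S.erase v) hAsub'
    rw [hX', hNb'] at h1
    have hvX : v ∈ Xside c S := Finset.mem_filter.mpr ⟨hv, hcv⟩
    have hXcard := Finset.card_erase_of_mem hvX
    have hX1 : 1 ≤ (Xside c S).card := Finset.card_pos.mpr ⟨v, hvX⟩
    omega
  have hzNb : z ∈ Nb G S A := Finset.mem_filter.mpr ⟨hz, ⟨v, hvA, hadj⟩⟩
  have hXz : Xside c (S.erase z) = Xside c S := by
    ext a
    simp only [Xside, Finset.mem_filter, Finset.mem_erase]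
    constructor
    · rintro ⟨⟨_, haS⟩, hca⟩
      exact ⟨haS, hca⟩
    · rintro ⟨haS, hca⟩
      refine ⟨⟨?_, haS⟩, hca⟩
      intro h
      subst h
      rw [hcz] at hca
      exact absurd hca (by simp)
  have hAz : A ⊆ Xside c (S.erase z) := hXz ▸ hAX
  have hNbz : Nb G (S.erase z) A = (Nb G S A).erase z := by
    ext y
    simp only [Nb, Finset.mem_filter, Finset.mem_erase]
    tauto
  have h2 := nu_count (G := G) (c := c) (S := S.erase z) hAz
  rw [hXz, hNbz] at h2
  have hNcard := Finset.card_erase_of_mem hzNb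
  have hN1 : 1 ≤ (Nb G S A).card := Finset.card_pos.mpr ⟨z, hzNb⟩
  omega

theorem key_lemma (hc : ∀ a b, G.Adj a b → c a ≠ c b) {v z : V} (hv : v ∈ S) (hz : z ∈ S)
    (hadj : G.Adj v z) (hin : nu G c (S.erase v) = nu G c S) :
    nu G c (S.erase z) < nu G c S := by
  rcases hcv : c v with _ | _
  · exact key_false hc hv hz hadj hcv hin
  · have hc' : ∀ a b, G.Adj a b → (fun x => !(c x)) a ≠ (fun x => !(c x)) b := by
      intro a b h hne
      exact hc a b h (by simpa using hne)
    have hcv' : (fun x => !(c x)) v = false := by simp [hcv]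
    rw [nu_swap (c := c) (S := S.erase v), nu_swap (c := c) (S := S)] at hin
    rw [nu_swap (c := c) (S := S.erase z), nu_swap (c := c) (S := S)]
    exact key_false hc' hv hz hadj hcv' hin

end Dev3
section Game
variable {V : Type} [Fintype V] [DecidableEq V]
variable {G : SimpleGraph V} {c : V → Bool} {S : Finset V} {M : Finset (V × V)}

def fsupp (w : V → ℕ) : Finset V := Finset.univ.filter (fun v => w v ≠ 0)

theorem mem_fsupp {w : V → ℕ} {v : V} : v ∈ fsupp w ↔ w v ≠ 0 := by simp [fsupp]

theorem IsMch.subset {M' : Finset (V × V)} (h : IsMch G c S M) (hMM : M' ⊆ M) :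
    IsMch G c S M' :=
  ⟨fun p hp => h.1 p (hMM hp), fun p hp q hq => h.2.1 p (hMM hp) q (hMM hq),
   fun p hp q hq => h.2.2 p (hMM hp) q (hMM hq)⟩

theorem nimMove_sum_lt {p q : V × (V → ℕ)} (h : nimMove G.Adj p q) :
    ∑ v, q.2 v < ∑ v, p.2 v := by
  obtain ⟨hadj, hlt, heq⟩ := h
  refine Finset.sum_lt_sum (fun i _ => ?_) ⟨p.1, Finset.mem_univ _, hlt⟩
  by_cases hi : i = p.1
  · subst hi; exact le_of_lt hlt
  · exact (heq i hi).le

theorem max_touches {u : V} (hu : u ∈ S) (hlt : nu G c (S.erase u) < nu G c S)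
    (hM : IsMch G c S M) (hcard : M.card = nu G c S) :
    ∃ p ∈ M, p.1 = u ∨ p.2 = u := by
  by_contra h
  push_neg at h
  have hfree : ∀ p ∈ M, p.1 ≠ u ∧ p.2 ≠ u := by
    intro p hp
    have := h p hp
    tauto
  have := nu_le (hM.restrict hfree)
  omega

theorem IsMch.insert_edge (h : IsMch G c S M) {a b : V}
    (hab : G.Adj a b) (haS : a ∈ S) (hbS : b ∈ S) (hca : c a = false) (hcb : c b = true)
    (hfree : ∀ p ∈ M, (p.1 ≠ a ∧ p.2 ≠ a) ∧ (p.1 ≠ b ∧ p.2 ≠ b)) :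
    IsMch G c S (insert (a, b) M) ∧ (insert (a, b) M).card = M.card + 1 := by
  classical
  have hnotmem : (a, b) ∉ M := fun hmem => ((hfree _ hmem).1).1 rfl
  constructor
  · refine ⟨?_, ?_, ?_⟩
    · intro p hp
      rcases Finset.mem_insert.mp hp with rfl | hp
      · exact ⟨hab, haS, hbS, hca, hcb⟩
      · exact h.1 p hp
    · intro p hp q hq hpq
      rcases Finset.mem_insert.mp hp with rfl | hp <;> rcases Finset.mem_insert.mp hq with rfl | hq
      · rfl
      · exact absurd hpq.symm ((hfree _ hq).1).1
      · exact absurd hpq ((hfree _ hp).1).1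
      · exact h.2.1 p hp q hq hpq
    · intro p hp q hq hpq
      rcases Finset.mem_insert.mp hp with rfl | hp <;> rcases Finset.mem_insert.mp hq with rfl | hq
      · rfl
      · exact absurd hpq.symm ((hfree _ hq).2).2
      · exact absurd hpq ((hfree _ hp).2).2
      · exact h.2.2 p hp q hq hpq
  · exact Finset.card_insert_of_notMem hnotmem

theorem bool_opp {x y : Bool} (h : x ≠ y) (hx : x = false) : y = true := by
  rcases hy : y with _ | _
  · exact absurd (hx.trans hy.symm) h
  · rfl

theorem bool_opp' {x y : Bool} (h : x ≠ y) (hx : x = true) : y = false := by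
  rcases hy : y with _ | _
  · rfl
  · exact absurd (hx.trans hy.symm) h

theorem mainGame (hc : ∀ a b, G.Adj a b → c a ≠ c b) :
    ∀ n (w : V → ℕ) (u : V), (∑ v, w v) = n →
    ((w u ≠ 0 ∧ nu G c ((fsupp w).erase u) = nu G c (fsupp w)) → NimRMLose G.Adj (u, w)) ∧
    ((w u = 0 ∨ nu G c ((fsupp w).erase u) < nu G c (fsupp w)) → NimRMWin G.Adj (u, w)) := by
  intro n
  induction n using Nat.strong_induction_on with
  | _ n IH =>
  intro w u hn
  constructor
  · rintro ⟨hw0, hnu⟩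
    refine NimRMLose.intro hw0 ?_
    intro q hq
    obtain ⟨hadj, hlt, heq⟩ := hq
    have hadj' : G.Adj u q.1 := hadj
    have hzu : q.1 ≠ u := fun h => G.irrefl (h ▸ hadj')
    have hw'z : q.2 q.1 = w q.1 := heq q.1 hzu
    by_cases hz0 : w q.1 = 0
    · exact NimRMWin.zero (hw'z.trans hz0)
    · have huS : u ∈ fsupp w := mem_fsupp.mpr hw0
      have hzS : q.1 ∈ fsupp w := mem_fsupp.mpr hz0
      have hsum : ∑ v, q.2 v < n := hn ▸ nimMove_sum_lt ⟨hadj, hlt, heq⟩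
      have IH2 := (IH _ hsum q.2 q.1 rfl).2
      apply IH2
      refine Or.inr ?_
      by_cases hu0 : q.2 u = 0
      · have hsupp : fsupp q.2 = (fsupp w).erase u := by
          ext x
          rw [mem_fsupp, Finset.mem_erase, mem_fsupp]
          by_cases hx : x = u
          · subst hx; simp [hu0]
          · rw [heq x hx]; tauto
        rw [hsupp]
        by_contra hge
        have hle := nu_erase_le (G := G) (c := c) (S := (fsupp w).erase u) (v := q.1)
        have heq2 : nu G c (((fsupp w).erase u).erase q.1) = nu G c ((fsupp w).erase u) := by
          omega
        obtain ⟨M, hM, hcard⟩ := nu_spec G c (((fsupp w).erase u).erase q.1)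
        have hfree : ∀ p ∈ M, (p.1 ≠ u ∧ p.2 ≠ u) ∧ (p.1 ≠ q.1 ∧ p.2 ≠ q.1) := by
          intro p hp
          have h1 := (hM.1 p hp).2.1
          have h2 := (hM.1 p hp).2.2.1
          rw [Finset.mem_erase, Finset.mem_erase] at h1 h2
          exact ⟨⟨h1.2.1, h2.2.1⟩, ⟨h1.1, h2.1⟩⟩
        have hMS : IsMch G c (fsupp w) M := by
          refine hM.mono ?_
          intro x hx
          exact Finset.mem_of_mem_erase (Finset.mem_of_mem_erase hx)
        have hclash : nu G c (fsupp w) + 1 ≤ nu G c (fsupp w) := by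
          rcases hcu : c u with _ | _
          · have hcz : c q.1 = true := bool_opp (hc _ _ hadj') hcu
            obtain ⟨hins, hinscard⟩ := hMS.insert_edge hadj' huS hzS hcu hcz hfree
            have := nu_le hins
            omega
          · have hcz : c q.1 = false := bool_opp' (hc _ _ hadj') hcu
            have hfree' : ∀ p ∈ M, (p.1 ≠ q.1 ∧ p.2 ≠ q.1) ∧ (p.1 ≠ u ∧ p.2 ≠ u) := by
              intro p hp
              exact ⟨(hfree p hp).2, (hfree p hp).1⟩
            obtain ⟨hins, hinscard⟩ := hMS.insert_edge hadj'.symm hzS huS hcz hcu hfree'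
            have := nu_le hins
            omega
        omega
      · have hsupp : fsupp q.2 = fsupp w := by
          ext x
          rw [mem_fsupp, mem_fsupp]
          by_cases hx : x = u
          · subst hx; tauto
          · rw [heq x hx]
        rw [hsupp]
        exact key_lemma hc huS hzS hadj' hnu
  · intro hwin
    by_cases hu0 : w u = 0
    · exact NimRMWin.zero hu0
    · have hlt : nu G c ((fsupp w).erase u) < nu G c (fsupp w) := hwin.resolve_left hu0
      have huS : u ∈ fsupp w := mem_fsupp.mpr hu0
      obtain ⟨M, hM, hcard⟩ := nu_spec G c (fsupp w)
      obtain ⟨p, hp, hpu⟩ := max_touches huS hlt hM hcard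
      obtain ⟨v', hadjv, hvS, hpv⟩ :
          ∃ v', G.Adj u v' ∧ v' ∈ fsupp w ∧ (p.1 = v' ∨ p.2 = v') := by
        rcases hpu with h1 | h1
        · exact ⟨p.2, h1 ▸ (hM.1 p hp).1, (hM.1 p hp).2.2.1, Or.inr rfl⟩
        · exact ⟨p.1, h1 ▸ (hM.1 p hp).1.symm, (hM.1 p hp).2.1, Or.inl rfl⟩
      have hvu : v' ≠ u := (G.ne_of_adj hadjv).symm
      set w' := Function.update w u 0 with hw'def
      have hmove : nimMove G.Adj (u, w) (v', w') := by
        refine ⟨hadjv, ?_, ?_⟩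
        · show w' u < w u
          rw [hw'def, Function.update_self]
          exact Nat.pos_of_ne_zero hu0
        · intro x hx
          exact Function.update_of_ne hx _ _
      refine NimRMWin.step hmove ?_
      have hsum : ∑ v, w' v < n := hn ▸ nimMove_sum_lt hmove
      apply (IH _ hsum w' v' rfl).1
      have hsupp : fsupp w' = (fsupp w).erase u := by
        ext x
        rw [mem_fsupp, Finset.mem_erase, mem_fsupp]
        by_cases hx : x = u
        · subst hx; simp [hw'def, Function.update_self]
        · rw [hw'def, Function.update_of_ne hx]; tauto
      constructor
      · show w' v' ≠ 0
        rw [hw'def, Function.update_of_ne hvu]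
        exact mem_fsupp.mp hvS
      · rw [hsupp]
        have h1 : nu G c (fsupp w) ≤ nu G c ((fsupp w).erase u) + 1 :=
          nu_le_nu_erase_add_one
        have hle := nu_erase_le (G := G) (c := c) (S := (fsupp w).erase u) (v := v')
        have hfree : ∀ q' ∈ M.erase p, (q'.1 ≠ u ∧ q'.2 ≠ u) ∧ (q'.1 ≠ v' ∧ q'.2 ≠ v') := by
          intro q' hq'
          have hq'M := Finset.mem_of_mem_erase hq'
          have hq'ne := (Finset.mem_erase.mp hq').1
          refine ⟨⟨?_, ?_⟩, ⟨?_, ?_⟩⟩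
          · intro h
            exact hq'ne (hM.touch_eq hq'M hp (Or.inl h) hpu)
          · intro h
            exact hq'ne (hM.touch_eq hq'M hp (Or.inr h) hpu)
          · intro h
            exact hq'ne (hM.touch_eq hq'M hp (Or.inl h) hpv)
          · intro h
            exact hq'ne (hM.touch_eq hq'M hp (Or.inr h) hpv)
        have hMe : IsMch G c (((fsupp w).erase u).erase v') (M.erase p) := by
          have h0 : IsMch G c (fsupp w) (M.erase p) := hM.subset (Finset.erase_subset _ _)
          have h1 : IsMch G c ((fsupp w).erase u) (M.erase p) :=
            h0.restrict (fun q' hq' => (hfree q' hq').1)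
          exact h1.restrict (fun q' hq' => (hfree q' hq').2)
        have h2 := nu_le hMe
        have hcarde : (M.erase p).card = M.card - 1 := Finset.card_erase_of_mem hp
        have hM1 : 1 ≤ M.card := Finset.card_pos.mpr ⟨p, hp⟩
        omega

theorem notBoth : ∀ n (w : V → ℕ) (u : V), (∑ v, w v) = n →
    NimRMWin G.Adj (u, w) → NimRMLose G.Adj (u, w) → False := by
  intro n
  induction n using Nat.strong_induction_on with
  | _ n IH =>
  intro w u hn hW hL
  cases hW with
  | zero h =>
    cases hL with
    | intro h0 _ => exact h0 h
  | step hm hLq =>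
    cases hL with
    | intro h0 hAll =>
      rename_i q
      have hWq := hAll _ hm
      exact IH _ (hn ▸ nimMove_sum_lt hm) q.2 q.1 rfl hWq hLq

end Game
section Translate
variable {V : Type} [Fintype V] [DecidableEq V]
variable {G : SimpleGraph V} {c : V → Bool} {S : Finset V} {M : Finset (V × V)}

def mchSub (_h : IsMch G c S M) : G.Subgraph where
  verts := {v | ∃ p ∈ M, p.1 = v ∨ p.2 = v}
  Adj a b := (a, b) ∈ M ∨ (b, a) ∈ M
  adj_sub := by
    rintro a b (hab | hab)
    · exact (_h.1 _ hab).1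
    · exact (_h.1 _ hab).1.symm
  edge_vert := by
    rintro a b (hab | hab)
    · exact ⟨(a, b), hab, Or.inl rfl⟩
    · exact ⟨(b, a), hab, Or.inr rfl⟩
  symm := by
    constructor
    rintro a b (hab | hab)
    · exact Or.inr hab
    · exact Or.inl hab

theorem mchSub_verts (h : IsMch G c S M) :
    (mchSub h).verts = {v | ∃ p ∈ M, p.1 = v ∨ p.2 = v} := rfl

theorem mchSub_adj (h : IsMch G c S M) (a b : V) :
    (mchSub h).Adj a b ↔ (a, b) ∈ M ∨ (b, a) ∈ M := Iff.rfl

theorem mchSub_matching (h : IsMch G c S M) : (mchSub h).IsMatching := by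
  rintro v ⟨p, hp, hpv⟩
  rcases hpv with hpv | hpv
  · refine ⟨p.2, Or.inl (by rw [← hpv]; simpa using hp), ?_⟩
    rintro y (hy | hy)
    · have := h.2.1 _ hy _ hp (by rw [hpv])
      rw [← this]
    · exfalso
      have h1 : c v = false := hpv ▸ (h.1 p hp).2.2.2.1
      have h2 : c v = true := (h.1 _ hy).2.2.2.2
      rw [h1] at h2
      exact absurd h2 (by simp)
  · refine ⟨p.1, Or.inr (by rw [← hpv]; simpa using hp), ?_⟩
    rintro y (hy | hy)
    · exfalso
      have h1 : c v = true := hpv ▸ (h.1 p hp).2.2.2.2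
      have h2 : c v = false := (h.1 _ hy).2.2.2.1
      rw [h1] at h2
      exact absurd h2 (by simp)
    · have := h.2.2 _ hy _ hp (by rw [hpv])
      rw [← this]

theorem pair_inj_on (h : IsMch G c S M) :
    Set.InjOn (fun p : V × V => s(p.1, p.2)) M := by
  intro p hp q hq hpq
  rcases Sym2.eq_iff.mp hpq with ⟨h1, h2⟩ | ⟨h1, h2⟩
  · exact Prod.ext h1 h2
  · exfalso
    have hc1 : c p.1 = false := (h.1 p hp).2.2.2.1
    have hc2 : c q.2 = true := (h.1 q hq).2.2.2.2
    rw [h1, hc2] at hc1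
    exact absurd hc1 (by simp)

theorem mchSub_ncard (h : IsMch G c S M) : (mchSub h).edgeSet.ncard = M.card := by
  classical
  have hedge : (mchSub h).edgeSet = ↑(M.image (fun p => s(p.1, p.2))) := by
    ext e
    induction e using Sym2.ind with
    | _ a b =>
      rw [SimpleGraph.Subgraph.mem_edgeSet]
      simp only [Finset.coe_image, Set.mem_image, Finset.mem_coe]
      constructor
      · rintro (hab | hab)
        · exact ⟨(a, b), hab, rfl⟩
        · exact ⟨(b, a), hab, Sym2.eq_swap⟩
      · rintro ⟨p, hp, hpe⟩
        rcases Sym2.eq_iff.mp hpe with ⟨h1, h2⟩ | ⟨h1, h2⟩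
        · have : p = (a, b) := Prod.ext h1 h2
          exact Or.inl (this ▸ hp)
        · have : p = (b, a) := Prod.ext h1 h2
          exact Or.inr (this ▸ hp)
  rw [hedge, Set.ncard_coe_finset]
  exact Finset.card_image_of_injOn (pair_inj_on h)

/-- From a subgraph matching produce a finset matching. -/
theorem ofSubgraph (hc : ∀ a b, G.Adj a b → c a ≠ c b) (H : G.Subgraph)
    (hH : H.IsMatching) :
    ∃ M : Finset (V × V), IsMch G c Finset.univ M ∧ M.card = H.edgeSet.ncard ∧
      (∀ v, (∃ p ∈ M, p.1 = v ∨ p.2 = v) ↔ v ∈ H.verts) := by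
  classical
  set M := Finset.univ.filter (fun p : V × V => H.Adj p.1 p.2 ∧ c p.1 = false) with hMdef
  have hmem : ∀ p : V × V, p ∈ M ↔ H.Adj p.1 p.2 ∧ c p.1 = false := by
    intro p
    rw [hMdef]
    simp
  have hMch : IsMch G c Finset.univ M := by
    refine ⟨?_, ?_, ?_⟩
    · intro p hp
      obtain ⟨hadj, hcp⟩ := (hmem p).mp hp
      have hg : G.Adj p.1 p.2 := H.adj_sub hadj
      refine ⟨hg, Finset.mem_univ _, Finset.mem_univ _, hcp, bool_opp (hc _ _ hg) hcp⟩
    · intro p hp q hq hpq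
      obtain ⟨hadjp, _⟩ := (hmem p).mp hp
      obtain ⟨hadjq, _⟩ := (hmem q).mp hq
      have hv : p.1 ∈ H.verts := H.edge_vert hadjp
      obtain ⟨y, _, hy⟩ := hH hv
      have e1 : p.2 = y := hy _ hadjp
      have e2 : q.2 = y := hy _ (hpq ▸ hadjq)
      exact Prod.ext hpq (e1.trans e2.symm)
    · intro p hp q hq hpq
      obtain ⟨hadjp, _⟩ := (hmem p).mp hp
      obtain ⟨hadjq, _⟩ := (hmem q).mp hq
      have hv : p.2 ∈ H.verts := H.edge_vert hadjp.symm
      obtain ⟨y, _, hy⟩ := hH hv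
      have e1 : p.1 = y := hy _ hadjp.symm
      have e2 : q.1 = y := hy _ (hpq ▸ hadjq.symm)
      exact Prod.ext (e1.trans e2.symm) hpq
  have hedge : H.edgeSet = ↑(M.image (fun p => s(p.1, p.2))) := by
    ext e
    induction e using Sym2.ind with
    | _ a b =>
      rw [SimpleGraph.Subgraph.mem_edgeSet]
      simp only [Finset.coe_image, Set.mem_image, Finset.mem_coe]
      constructor
      · intro hab
        rcases hca : c a with _ | _
        · exact ⟨(a, b), (hmem _).mpr ⟨hab, hca⟩, rfl⟩
        · have hcb : c b = false := bool_opp' (hc _ _ (H.adj_sub hab)) hca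
          exact ⟨(b, a), (hmem _).mpr ⟨hab.symm, hcb⟩, Sym2.eq_swap⟩
      · rintro ⟨p, hp, hpe⟩
        obtain ⟨hadj, _⟩ := (hmem p).mp hp
        rcases Sym2.eq_iff.mp hpe with ⟨h1, h2⟩ | ⟨h1, h2⟩
        · rw [← h1, ← h2]; exact hadj
        · rw [← h1, ← h2]; exact hadj.symm
  refine ⟨M, hMch, ?_, ?_⟩
  · rw [hedge, Set.ncard_coe_finset]
    exact (Finset.card_image_of_injOn (pair_inj_on hMch)).symm
  · intro v
    constructor
    · rintro ⟨p, hp, hpv | hpv⟩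
      · obtain ⟨hadj, _⟩ := (hmem p).mp hp
        exact hpv ▸ H.edge_vert hadj
      · obtain ⟨hadj, _⟩ := (hmem p).mp hp
        exact hpv ▸ H.edge_vert hadj.symm
    · intro hv
      obtain ⟨y, hy, _⟩ := hH hv
      rcases hcv : c v with _ | _
      · exact ⟨(v, y), (hmem _).mpr ⟨hy, hcv⟩, Or.inl rfl⟩
      · have hcy : c y = false := bool_opp' (hc _ _ (H.adj_sub hy)) hcv
        exact ⟨(y, v), (hmem _).mpr ⟨hy.symm, hcy⟩, Or.inr rfl⟩

theorem finalEquiv (hc : ∀ a b, G.Adj a b → c a ≠ c b) (u : V) :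
    (∀ M : G.Subgraph, MaxMatching G M → u ∈ M.verts) ↔
      nu G c (Finset.univ.erase u) < nu G c Finset.univ := by
  classical
  constructor
  · intro hall
    by_contra hge
    have hle : nu G c (Finset.univ.erase u) ≤ nu G c Finset.univ := nu_erase_le
    have heq : nu G c (Finset.univ.erase u) = nu G c Finset.univ := by omega
    obtain ⟨M₀, hM₀, hcard₀⟩ := nu_spec G c (Finset.univ.erase u)
    have hM₀' : IsMch G c Finset.univ M₀ := hM₀.mono (Finset.subset_univ _)
    have hmax : MaxMatching G (mchSub hM₀') := by
      refine ⟨mchSub_matching hM₀', ?_⟩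
      intro N hN
      obtain ⟨MN, hMN, hcardN, _⟩ := ofSubgraph hc N hN
      rw [← hcardN, mchSub_ncard]
      calc MN.card ≤ nu G c Finset.univ := nu_le hMN
        _ = M₀.card := by omega
    have hu := hall _ hmax
    rw [mchSub_verts] at hu
    obtain ⟨p, hp, hpu⟩ := hu
    rcases hpu with hpu | hpu
    · have := (hM₀.1 p hp).2.1
      rw [hpu] at this
      exact absurd (Finset.mem_erase.mp this).1 (by simp)
    · have := (hM₀.1 p hp).2.2.1
      rw [hpu] at this
      exact absurd (Finset.mem_erase.mp this).1 (by simp)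
  · intro hlt N hN
    by_contra hu
    obtain ⟨MN, hMN, hcardN, htouch⟩ := ofSubgraph hc N hN.1
    have hfree : ∀ p ∈ MN, p.1 ≠ u ∧ p.2 ≠ u := by
      intro p hp
      constructor
      · intro h
        exact hu ((htouch u).mp ⟨p, hp, Or.inl h⟩)
      · intro h
        exact hu ((htouch u).mp ⟨p, hp, Or.inr h⟩)
    have hres : IsMch G c (Finset.univ.erase u) MN := hMN.restrict hfree
    have h1 : MN.card ≤ nu G c (Finset.univ.erase u) := nu_le hres
    -- N is maximum, so its cardinality is at least nu univ
    obtain ⟨M₁, hM₁, hcard₁⟩ := nu_spec G c Finset.univ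
    have h2 := hN.2 _ (mchSub_matching hM₁)
    rw [mchSub_ncard] at h2
    omega

end Translate
/-- Misère NimG-RM (no loops) on a bipartite graph with strictly positive weights is a
first-player win iff every maximum matching covers the starting vertex. -/
theorem stmt0 {V : Type} [Fintype V] (G : SimpleGraph V) (hbip : G.Colorable 2)
    (w : V → ℕ) (hw : ∀ v, 0 < w v) (u : V) :
    NimRMWin G.Adj (u, w) ↔ ∀ M : G.Subgraph, MaxMatching G M → u ∈ M.verts := by
  classical
  obtain ⟨C⟩ := hbip
  set c : V → Bool := fun v => decide (C v = 1) with hcdef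
  have hc : ∀ a b, G.Adj a b → c a ≠ c b := by
    intro a b hab hne
    have hv := C.valid hab
    rw [hcdef] at hne
    simp only [decide_eq_decide] at hne
    have h2 : ∀ x : Fin 2, x = 0 ∨ x = 1 := by decide
    rcases h2 (C a) with ha | ha <;> rcases h2 (C b) with hb | hb <;> simp_all
  have hW : fsupp w = Finset.univ := by
    ext v
    simp [fsupp, (hw v).ne']
  have hchar : NimRMWin G.Adj (u, w) ↔
      nu G c ((fsupp w).erase u) < nu G c (fsupp w) := by
    constructor
    · intro hWin
      by_contra hge
      have hle : nu G c ((fsupp w).erase u) ≤ nu G c (fsupp w) := nu_erase_le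
      have heq : nu G c ((fsupp w).erase u) = nu G c (fsupp w) := by omega
      have hLose := (mainGame hc (∑ v, w v) w u rfl).1 ⟨(hw u).ne', heq⟩
      exact notBoth (∑ v, w v) w u rfl hWin hLose
    · intro hlt
      exact (mainGame hc (∑ v, w v) w u rfl).2 (Or.inr hlt)
  rw [hchar, hW]
  exact (finalEquiv hc u).symm
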